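/- Under hyper-generalized recurrence with recurrence 1-forms A and B, the contracted derivative of the curvature satisfies, for all U, X, Z ∈ V: (∇_U Ric)(X,Z) = (A(U) + (n−2)B(U))·Ric(X,Z) + r·B(U)·g(X,Z). In particular, if r ≠ 0 then, setting A₁ := A + (n−2)B and B₁ := r·B, the 1-form B₁ is nonzero and ∇_U Ric = A₁(U)·Ric + B₁(U)·g, i.e. the space is generalized Ricci recurrent. (Theorem 2.2(a).) -/

import Mathlib

open scoped BigOperators

/-- Kulkarni–Nomizu product of two bilinear forms (as real-valued functions). -/
def KN {V : Type*} (h k : V → V → ℝ) (X Y Z W : V) : ℝ :=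
  h X Z * k Y W + h Y W * k X Z - h X W * k Y Z - h Y Z * k X W

/-- The tensor `G(X,Y,Z,W) = g(X,Z)g(Y,W) - g(Y,Z)g(X,W)`. -/
def Gten {V : Type*} (g : V → V → ℝ) (X Y Z W : V) : ℝ :=
  g X Z * g Y W - g Y Z * g X W

/-- Derivation action of the curvature endomorphism `Rend U V` on a quadrilinear form `T`. -/
def derAct {V : Type*} (Rend : V → V → V → V) (T : V → V → V → V → ℝ)
    (U V' X Y Z W : V) : ℝ :=
  - T (Rend U V' X) Y Z W - T X (Rend U V' Y) Z W
    - T X Y (Rend U V' Z) W - T X Y Z (Rend U V' W)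

theorem hgr_generalized_ricci_recurrent {V : Type*} [AddCommGroup V] [Module ℝ V]
    (n : ℕ) (hn : 3 ≤ n)
    (b : Module.Basis (Fin n) ℝ V) (e' : Fin n → V)
    (g : V →ₗ[ℝ] V →ₗ[ℝ] ℝ)
    (hg_symm : ∀ X Y, g X Y = g Y X)
    (hg_nd : ∀ X, (∀ Y, g X Y = 0) → X = 0)
    (hdual : ∀ i j, g (b i) (e' j) = if i = j then (1 : ℝ) else 0)
    (R : V →ₗ[ℝ] V →ₗ[ℝ] V →ₗ[ℝ] V →ₗ[ℝ] ℝ)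
    (hR_ne : R ≠ 0)
    (hR_anti : ∀ X Y Z W, R X Y Z W = - R Y X Z W)
    (hR_pair : ∀ X Y Z W, R X Y Z W = R Z W X Y)
    (Ric : V → V → ℝ)
    (hRic : ∀ X Z, Ric X Z = ∑ i, R X (b i) Z (e' i))
    (r : ℝ) (hr : r = ∑ i, Ric (b i) (e' i))
    (D : V →ₗ[ℝ] V →ₗ[ℝ] V →ₗ[ℝ] V →ₗ[ℝ] V →ₗ[ℝ] ℝ)
    (hBianchi : ∀ X Y Z W U, D X Y Z W U + D Y Z X W U + D Z X Y W U = 0)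
    (A B : V →ₗ[ℝ] ℝ) (hA : A ≠ 0) (hB : B ≠ 0)
    (hHGR : ∀ U X Y Z W,
      D U X Y Z W = A U * R X Y Z W + B U * KN (fun a c => g a c) Ric X Y Z W)
    (DRic : V → V → V → ℝ)
    (hDRicDef : ∀ U X Z, DRic U X Z = ∑ i, D U X (b i) Z (e' i))
    :
    (∀ U X Z, DRic U X Z
        = (A U + ((n : ℝ) - 2) * B U) * Ric X Z + r * B U * g X Z) ∧
    (r ≠ 0 →
      r • B ≠ (0 : V →ₗ[ℝ] ℝ) ∧
      ∀ U X Z, DRic U X Z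
        = (A + ((n : ℝ) - 2) • B) U * Ric X Z + (r • B) U * g X Z) := by

  have hXrep : ∀ (X : V) (j : Fin n), g X (e' j) = b.repr X j := by
    intro X j
    conv_lhs => rw [← b.sum_repr X]
    simp [map_sum, map_smul, LinearMap.sum_apply, LinearMap.smul_apply, smul_eq_mul, hdual, -Module.Basis.sum_repr]
  have hZrep : ∀ Z : V, ∑ i, (g (b i) Z) • e' i = Z := by
    intro Z
    have key : ∀ j, g (b j) (∑ i, g (b i) Z • e' i - Z) = 0 := by
      intro j
      have h1 : g (b j) (∑ i, g (b i) Z • e' i) = g (b j) Z := by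
        simp only [map_sum, map_smul, smul_eq_mul]
        have : ∀ i ∈ Finset.univ, g (b i) Z * g (b j) (e' i)
            = if i = j then g (b j) Z else 0 := by
          intro i _
          rw [hdual]
          by_cases h : j = i
          · subst h; simp
          · simp [h, Ne.symm h, fun h' : i = j => h h'.symm]
        rw [Finset.sum_congr rfl this]
        simp
      simp [map_sub, h1]
    have hall : ∀ Y, g (∑ i, g (b i) Z • e' i - Z) Y = 0 := by
      intro Y
      rw [hg_symm]
      conv_lhs => rw [← b.sum_repr Y]
      simp only [map_sum, map_smul, LinearMap.sum_apply, LinearMap.smul_apply, smul_eq_mul]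
      rw [Finset.sum_congr rfl (fun j _ => by rw [key j, mul_zero])]
      simp
    have := hg_nd _ hall
    exact sub_eq_zero.mp this
  have part1 : ∀ U X Z, DRic U X Z
      = (A U + ((n : ℝ) - 2) * B U) * Ric X Z + r * B U * g X Z := by
    intro U X Z
    have hR1 : ∀ (Y Z' W : V), (∑ i, b.repr X i * R (b i) Y Z' W) = R X Y Z' W := by
      intro Y Z' W
      conv_rhs => rw [← b.sum_repr X]
      simp [map_sum, map_smul, LinearMap.sum_apply, LinearMap.smul_apply, smul_eq_mul, -Module.Basis.sum_repr]
    have hR3 : ∀ (Y W : V), (∑ i, g (b i) Z * R X Y (e' i) W) = R X Y Z W := by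
      intro Y W
      conv_rhs => rw [← hZrep Z]
      simp [map_sum, map_smul, LinearMap.sum_apply, LinearMap.smul_apply, smul_eq_mul]
    have hKN : ∑ i, KN (fun a c => g a c) Ric X (b i) Z (e' i)
        = g X Z * r + (n : ℝ) * Ric X Z - Ric X Z - Ric X Z := by
      simp only [KN]
      rw [Finset.sum_sub_distrib, Finset.sum_sub_distrib, Finset.sum_add_distrib]
      have s1 : ∑ i, g X Z * Ric (b i) (e' i) = g X Z * r := by
        rw [← Finset.mul_sum, ← hr]
      have s2 : ∑ i, g (b i) (e' i) * Ric X Z = (n : ℝ) * Ric X Z := by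
        simp [hdual, Finset.sum_const, nsmul_eq_mul]
      have s3 : ∑ i, g X (e' i) * Ric (b i) Z = Ric X Z := by
        have : ∀ i ∈ Finset.univ, g X (e' i) * Ric (b i) Z
            = ∑ j, b.repr X i * R (b i) (b j) Z (e' j) := by
          intro i _
          rw [hXrep, hRic, Finset.mul_sum]
        rw [Finset.sum_congr rfl this, Finset.sum_comm]
        rw [Finset.sum_congr rfl (fun j _ => hR1 (b j) Z (e' j)), ← hRic]
      have s4 : ∑ i, g (b i) Z * Ric X (e' i) = Ric X Z := by
        have : ∀ i ∈ Finset.univ, g (b i) Z * Ric X (e' i)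
            = ∑ j, g (b i) Z * R X (b j) (e' i) (e' j) := by
          intro i _
          rw [hRic, Finset.mul_sum]
        rw [Finset.sum_congr rfl this, Finset.sum_comm]
        rw [Finset.sum_congr rfl (fun j _ => hR3 (b j) (e' j)), ← hRic]
      rw [s1, s2, s3, s4]
    rw [hDRicDef]
    calc ∑ i, D U X (b i) Z (e' i)
        = ∑ i, (A U * R X (b i) Z (e' i)
            + B U * KN (fun a c => g a c) Ric X (b i) Z (e' i)) := by
          exact Finset.sum_congr rfl (fun i _ => hHGR U X (b i) Z (e' i))
      _ = A U * Ric X Z + B U * (g X Z * r + (n : ℝ) * Ric X Z - Ric X Z - Ric X Z) := by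
          rw [Finset.sum_add_distrib, ← Finset.mul_sum, ← Finset.mul_sum, ← hRic, hKN]
      _ = (A U + ((n : ℝ) - 2) * B U) * Ric X Z + r * B U * g X Z := by ring
  refine ⟨part1, fun hr0 => ⟨smul_ne_zero hr0 hB, fun U X Z => ?_⟩⟩
  rw [part1]
  simp only [LinearMap.add_apply, LinearMap.smul_apply, smul_eq_mul]
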